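/- The wheel W_n (n ≥ 3) is a square if and only if n is even. -/

import Mathlib

open SimpleGraph

/-- Butterfly involution data: `φ` is an involutive automorphism of `G`, with nonempty
fixed set and nonempty non-fixed set, the common-neighbor condition, and a partition
`A0 ∪ A1` of the non-fixed vertices with no crossing edges, swapped by `φ`. -/
def ButterflyData {V : Type*} (G : SimpleGraph V) (phi : G ≃g G) (A0 A1 : Set V) : Prop :=
  Function.Involutive phi ∧
  (∃ v, phi v = v) ∧ (∃ v, phi v ≠ v) ∧
  (∀ u : V, phi u ≠ u →
    G.neighborSet u ∩ G.neighborSet (phi u) = G.neighborSet u ∩ {v | phi v = v}) ∧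
  A0 ∪ A1 = {v | phi v ≠ v} ∧ Disjoint A0 A1 ∧
  (∀ a ∈ A0, ∀ b ∈ A1, ¬ G.Adj a b) ∧
  (∀ a ∈ A0, phi a ∈ A1) ∧ (∀ a ∈ A1, phi a ∈ A0)

/-- A graph is a square (in the gluing algebra) iff it admits a butterfly involution. -/
def IsSquareGraph {V : Type*} (G : SimpleGraph V) : Prop :=
  ∃ (phi : G ≃g G) (A0 A1 : Set V), ButterflyData G phi A0 A1

/-- The wheel graph `W_n`: the cycle `C_n` together with a hub (`none`) adjacent to
every cycle vertex. -/
def wheelGraph (n : ℕ) : SimpleGraph (Option (Fin n)) where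
  Adj x y := match x, y with
    | none, none => False
    | none, some _ => True
    | some _, none => True
    | some a, some b => (SimpleGraph.cycleGraph n).Adj a b
  symm := by constructor; rintro (_ | a) (_ | b) h <;> first | exact h.symm | trivial
  loopless := by
    constructor; rintro (_ | a) h
    · exact (h : False).elim
    · exact SimpleGraph.irrefl _ h

section Helpers

open scoped Fin.NatCast Fin.CommRing

variable {m : ℕ}

private lemma wheel_adj_ss {i j : Fin (m+2)} :
    (wheelGraph (m+2)).Adj (some i) (some j) ↔ (cycleGraph (m+2)).Adj i j := Iff.rfl

private lemma wheel_adj_ns (j : Fin (m+2)) : (wheelGraph (m+2)).Adj none (some j) := trivial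

private lemma fin_two_val (hm : 1 ≤ m) : (2 : Fin (m+2)).val = 2 := by
  have h : (2 : Fin (m+2)) = ((2:ℕ) : Fin (m+2)) := rfl
  rw [h, Fin.val_natCast, Nat.mod_eq_of_lt (by omega)]

private lemma fin_two_ne_zero (hm : 1 ≤ m) : (2 : Fin (m+2)) ≠ 0 := by
  intro h
  have := congrArg Fin.val h
  rw [fin_two_val hm, Fin.val_zero] at this
  exact two_ne_zero this

private lemma fin_neg_val (i : Fin (m+2)) (hi : i.val ≠ 0) : (-i).val = (m+2) - i.val := by
  have h1 : -i = 0 - i := by ring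
  have h2 : ((0:Fin (m+2)) - i).val = (m + 2 - i.val + (0:Fin (m+2)).val) % (m+2) := by
    rw [Fin.sub_def]
  rw [h1, h2, Fin.val_zero, Nat.add_zero, Nat.mod_eq_of_lt (by omega)]

private lemma cycle_adj_val {i j : Fin (m+2)} (h : (cycleGraph (m+2)).Adj i j) :
    (i.val + 1) % (m+2) = j.val ∨ (j.val + 1) % (m+2) = i.val := by
  rw [cycleGraph_adj] at h
  rcases h with h | h
  · right
    have hij : i = j + 1 := by linear_combination h
    rw [hij, Fin.val_add, Fin.val_one]
  · left
    have hij : j = i + 1 := by linear_combination h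
    rw [hij, Fin.val_add, Fin.val_one]

private lemma two_mul_zero_iff (c : ℕ) (hc : 2 ≤ c) (hmc : m + 2 = 2 * c) (i : Fin (m+2)) :
    2 * i = 0 ↔ (i.val = 0 ∨ i.val = c) := by
  have hval : (2 * i).val = (2 * i.val) % (m+2) := by
    rw [Fin.val_mul, fin_two_val (by omega)]
  constructor
  · intro h
    have hmod : (2 * i.val) % (m+2) = 0 := by
      rw [← hval, h, Fin.val_zero]
    have hub : i.val < m + 2 := i.isLt
    rcases Nat.lt_or_ge (2 * i.val) (m+2) with hlt | hge
    · rw [Nat.mod_eq_of_lt hlt] at hmod; omega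
    · rw [Nat.mod_eq_sub_mod hge, Nat.mod_eq_of_lt (by omega)] at hmod
      omega
  · rintro (h | h)
    · have : i = 0 := Fin.ext (by simp [h])
      rw [this, mul_zero]
    · apply Fin.ext
      rw [hval, Fin.val_zero, h, ← hmc, Nat.mod_self]

private lemma even_square (c : ℕ) (hc : 2 ≤ c) (hmc : m + 2 = 2 * c) :
    IsSquareGraph (wheelGraph (m+2)) := by
  have hm1 : 1 ≤ m := by omega
  classical
  have mri : ∀ a b : Option (Fin (m+2)),
      (wheelGraph (m+2)).Adj ((Equiv.neg (Fin (m+2))).optionCongr a)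
        ((Equiv.neg (Fin (m+2))).optionCongr b) ↔ (wheelGraph (m+2)).Adj a b := by
    intro a b
    rcases a with _ | i <;> rcases b with _ | j <;>
        simp only [Equiv.optionCongr_apply, Option.map_none, Option.map_some,
          Equiv.neg_apply] <;>
      first
        | exact Iff.rfl
        | (rw [wheel_adj_ss, wheel_adj_ss, cycleGraph_adj, cycleGraph_adj,
            show -i - -j = j - i from by ring, show -j - -i = i - j from by ring]
           exact or_comm)
  set phi : wheelGraph (m+2) ≃g wheelGraph (m+2) :=
    ⟨(Equiv.neg (Fin (m+2))).optionCongr, mri _ _⟩ with hphidef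
  have hphin : phi none = none := rfl
  have hphis : ∀ i : Fin (m+2), phi (some i) = some (-i) := fun i => rfl
  have hneg_iff : ∀ i : Fin (m+2), (-i = i) ↔ 2 * i = 0 := by
    intro i
    constructor
    · intro h; linear_combination -h
    · intro h; linear_combination -h
  refine ⟨phi,
    {x : Option (Fin (m+2)) | ∃ i : Fin (m+2), x = some i ∧ 0 < i.val ∧ i.val < c},
    {x : Option (Fin (m+2)) | ∃ i : Fin (m+2), x = some i ∧ c < i.val},
    ?_, ⟨none, hphin⟩, ?_, ?_, ?_, ?_, ?_, ?_, ?_⟩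
  · -- involutive
    intro x
    rcases x with _ | i
    · rfl
    · rw [hphis, hphis, neg_neg]
  · -- exists nonfixed
    refine ⟨some 1, ?_⟩
    rw [hphis]
    intro h
    have h1 : -(1 : Fin (m+2)) = 1 := Option.some_injective _ h
    have h2 := (hneg_iff 1).mp h1
    have h3 := (two_mul_zero_iff c hc hmc 1).mp h2
    rw [Fin.val_one] at h3
    omega
  · -- common neighbor condition
    intro u hu
    obtain ⟨i, rfl⟩ : ∃ i, u = some i := by
      rcases u with _ | i
      · exact absurd hphin hu
      · exact ⟨i, rfl⟩
    have h2i : ¬ (2 * i = 0) := by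
      intro h
      exact hu (by rw [hphis, (hneg_iff i).mpr h])
    ext v
    rcases v with _ | j
    · simp only [Set.mem_inter_iff, mem_neighborSet, hphis, Set.mem_setOf_eq, hphin]
      constructor <;> rintro ⟨h1, -⟩ <;> exact ⟨h1, by trivial⟩
    · simp only [Set.mem_inter_iff, mem_neighborSet, hphis, Set.mem_setOf_eq]
      rw [wheel_adj_ss, wheel_adj_ss]
      refine and_congr_right fun hadj => ?_
      rw [cycleGraph_adj] at hadj
      rw [cycleGraph_adj]
      have hjj : (some (-j) = some j) ↔ (-j = j) := Option.some_inj
      rw [hjj]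
      constructor
      · rintro (h | h)
        · rcases hadj with h' | h'
          · exact absurd (by linear_combination h' - h) h2i
          · linear_combination h - h'
        · rcases hadj with h' | h'
          · linear_combination h' - h
          · exact absurd (by linear_combination h - h') h2i
      · intro h
        rcases hadj with h' | h'
        · right; linear_combination h' - h
        · left; linear_combination h' + h
  · -- union
    ext x
    rcases x with _ | i
    · simp [hphin]
    · simp only [Set.mem_union, Set.mem_setOf_eq, hphis, Option.some_inj, ne_eq]
      have hval : i.val < m + 2 := i.isLt
      rw [show (¬ -i = i) ↔ ¬ (2 * i = 0) from not_congr (hneg_iff i),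
        show (¬ 2 * i = 0) ↔ ¬ (i.val = 0 ∨ i.val = c) from
          not_congr (two_mul_zero_iff c hc hmc i)]
      constructor
      · rintro (⟨k, rfl, h1, h2⟩ | ⟨k, rfl, h1⟩) <;> omega
      · intro h
        push_neg at h
        rcases Nat.lt_or_ge i.val c with h' | h'
        · exact Or.inl ⟨i, rfl, by omega, h'⟩
        · exact Or.inr ⟨i, rfl, by omega⟩
  · -- disjoint
    rw [Set.disjoint_left]
    rintro x ⟨k, rfl, h1, h2⟩ ⟨k', hk', h3⟩
    obtain rfl : k = k' := Option.some_injective _ hk'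
    omega
  · -- no crossing edges
    rintro a ⟨i, rfl, hi1, hi2⟩ b ⟨j, rfl, hj1⟩ hadj
    rw [wheel_adj_ss] at hadj
    have hjv : j.val < m + 2 := j.isLt
    rcases cycle_adj_val hadj with h | h
    · rw [Nat.mod_eq_of_lt (by omega)] at h
      omega
    · rcases Nat.lt_or_ge (j.val + 1) (m + 2) with h' | h'
      · rw [Nat.mod_eq_of_lt h'] at h
        omega
      · have : j.val + 1 = m + 2 := by omega
        rw [this, Nat.mod_self] at h
        omega
  · -- A0 to A1
    rintro a ⟨i, rfl, hi1, hi2⟩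
    rw [hphis]
    refine ⟨-i, rfl, ?_⟩
    rw [fin_neg_val i (by omega)]
    omega
  · -- A1 to A0
    rintro a ⟨i, rfl, hi1⟩
    rw [hphis]
    refine ⟨-i, rfl, ?_, ?_⟩ <;>
      · rw [fin_neg_val i (by omega)]
        have := i.isLt
        omega

private lemma fin_cast_key (t : ℕ) (hmt : m = 2*t + 1) :
    ((2*t+4 : ℕ) : Fin (m+2)) = 1 := by
  have h1 : (2*t+4 : ℕ) = (m+2) + 1 := by omega
  rw [h1, Nat.cast_add, Nat.cast_one, Fin.natCast_self, zero_add]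

private lemma odd_not_square (t : ℕ) (hmt : m = 2*t + 1) :
    ¬ IsSquareGraph (wheelGraph (m+2)) := by
  rintro ⟨phi, A0, A1, hinv, ⟨f, hf⟩, ⟨g, hg⟩, hcn, hunion, hdisj, hcross, h01, h10⟩
  have hm1 : 1 ≤ m := by omega
  have two_ne : (2 : Fin (m+2)) ≠ 0 := fin_two_ne_zero hm1
  have hmem : ∀ x, phi x ≠ x → x ∈ A0 ∪ A1 := by
    intro x hx; rw [hunion]; exact hx
  have hnoadj : ∀ x, phi x ≠ x → ¬ (wheelGraph (m+2)).Adj x (phi x) := by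
    intro x hx hadj
    rcases hmem x hx with h0 | h1
    · exact hcross x h0 (phi x) (h01 x h0) hadj
    · exact hcross (phi x) (h10 x h1) x h1 hadj.symm
  have hnone : phi none = none := by
    by_contra h
    rcases hq : phi none with _ | j
    · exact h hq
    · refine hnoadj none h ?_
      rw [hq]; exact wheel_adj_ns j
  have hsome : ∀ i : Fin (m+2), ∃ j, phi (some i) = some j := by
    intro i
    rcases hq : phi (some i) with _ | j
    · exact absurd (phi.toEquiv.injective (hq.trans hnone.symm)) (by simp)
    · exact ⟨j, rfl⟩
  choose p hp using hsome
  have hpinj : Function.Injective p := by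
    intro i j hij
    have h1 : phi (some i) = phi (some j) := by rw [hp i, hp j, hij]
    exact Option.some_injective _ (phi.toEquiv.injective h1)
  have hpadj : ∀ i j : Fin (m+2),
      (cycleGraph (m+2)).Adj (p i) (p j) ↔ (cycleGraph (m+2)).Adj i j := by
    intro i j
    have h1 := phi.map_adj_iff (v := some i) (w := some j)
    rw [hp i, hp j] at h1
    exact h1
  have hstep : ∀ i : Fin (m+2), p (i + 1) = p i + 1 ∨ p (i + 1) = p i - 1 := by
    intro i
    have h1 : (cycleGraph (m+2)).Adj i (i+1) := cycleGraph_adj.mpr (Or.inr (by ring))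
    have h2 := (hpadj i (i+1)).mpr h1
    rw [cycleGraph_adj] at h2
    rcases h2 with h | h
    · right; linear_combination -h
    · left; linear_combination h
  have hcancel : ∀ i : Fin (m+2), i + 2 ≠ i := by
    intro i h
    exact two_ne (by linear_combination h)
  have hfwd : ∀ i : Fin (m+2), p (i+1) = p i + 1 → p (i+1+1) = p (i+1) + 1 := by
    intro i h
    rcases hstep (i+1) with h' | h'
    · exact h'
    · exfalso
      have h2 : p (i+1+1) = p i := by rw [h', h]; ring
      have h3 := hpinj h2
      exact hcancel i (by linear_combination h3)
  have hbwd : ∀ i : Fin (m+2), p (i+1) = p i - 1 → p (i+1+1) = p (i+1) - 1 := by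
    intro i h
    rcases hstep (i+1) with h' | h'
    · exfalso
      have h2 : p (i+1+1) = p i := by rw [h', h]; ring
      have h3 := hpinj h2
      exact hcancel i (by linear_combination h3)
    · exact h'
  have hpp : ∀ i, p (p i) = i := by
    intro i
    have h1 := hinv (some i)
    rw [hp i, hp (p i)] at h1
    exact Option.some_injective _ h1
  have hkey1 : (2 : Fin (m+2)) * ((t+2 : ℕ) : Fin (m+2)) = 1 := by
    have h1 : (2 : Fin (m+2)) * ((t+2 : ℕ) : Fin (m+2)) = ((2*t+4 : ℕ) : Fin (m+2)) := by
      push_cast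
      ring
    rw [h1, fin_cast_key t hmt]
  rcases hstep 0 with hdir | hdir
  · -- rotation case : p i = p 0 + i, forces identity
    have hplus : ∀ k : ℕ, p ((k : Fin (m+2)) + 1) = p (k : Fin (m+2)) + 1 := by
      intro k
      induction k with
      | zero => simpa using hdir
      | succ k ih =>
        have hc : ((k+1 : ℕ) : Fin (m+2)) = (k : Fin (m+2)) + 1 := by push_cast; ring
        rw [hc]
        exact hfwd _ ih
    have hall : ∀ k : ℕ, p (k : Fin (m+2)) = p 0 + (k : Fin (m+2)) := by
      intro k
      induction k with
      | zero => simp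
      | succ k ih =>
        have hc : ((k+1 : ℕ) : Fin (m+2)) = (k : Fin (m+2)) + 1 := by push_cast; ring
        rw [hc, hplus k, ih]
        ring
    have hform : ∀ i : Fin (m+2), p i = p 0 + i := by
      intro i
      have h1 := hall i.val
      rwa [Fin.cast_val_eq_self] at h1
    have h2p0 : 2 * p 0 = 0 := by
      have h1 := hpp 0
      rw [hform (p 0), hform 0] at h1
      linear_combination h1
    have hp00 : p 0 = 0 := by
      calc p 0 = ((t+2 : ℕ) : Fin (m+2)) * (2 * p 0) := by
            rw [← mul_assoc, mul_comm (((t+2:ℕ)) : Fin (m+2)) 2, hkey1, one_mul]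
        _ = 0 := by rw [h2p0, mul_zero]
    apply hg
    rcases g with _ | i
    · exact hnone
    · rw [hp i, hform i, hp00, zero_add]
  · -- reflection case : p i = p 0 - i
    have hminus : ∀ k : ℕ, p ((k : Fin (m+2)) + 1) = p (k : Fin (m+2)) - 1 := by
      intro k
      induction k with
      | zero => simpa using hdir
      | succ k ih =>
        have hc : ((k+1 : ℕ) : Fin (m+2)) = (k : Fin (m+2)) + 1 := by push_cast; ring
        rw [hc]
        exact hbwd _ ih
    have hall : ∀ k : ℕ, p (k : Fin (m+2)) = p 0 - (k : Fin (m+2)) := by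
      intro k
      induction k with
      | zero => simp
      | succ k ih =>
        have hc : ((k+1 : ℕ) : Fin (m+2)) = (k : Fin (m+2)) + 1 := by push_cast; ring
        rw [hc, hminus k, ih]
        ring
    have hform : ∀ i : Fin (m+2), p i = p 0 - i := by
      intro i
      have h1 := hall i.val
      rwa [Fin.cast_val_eq_self] at h1
    set a : Fin (m+2) := ((t+2 : ℕ) : Fin (m+2)) * p 0 with ha
    have h2a : 2 * a = p 0 := by
      rw [ha, ← mul_assoc, hkey1, one_mul]
    have hfix : ∀ i : Fin (m+2), p i = i ↔ i = a := by
      intro i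
      constructor
      · intro h
        have h2i : 2 * i = p 0 := by
          rw [hform i] at h
          linear_combination -h
        calc i = ((t+2 : ℕ) : Fin (m+2)) * (2 * i) := by
              rw [← mul_assoc, mul_comm (((t+2:ℕ)) : Fin (m+2)) 2, hkey1, one_mul]
          _ = a := by rw [h2i, ha]
      · intro h
        rw [h, hform]
        linear_combination -h2a
    have hnonfix : ∀ k : ℕ, 1 ≤ k → k < m+2 →
        phi (some (a + (k : Fin (m+2)))) ≠ some (a + (k : Fin (m+2))) := by
      intro k hk1 hk2 h
      have h1 : p (a + (k : Fin (m+2))) = a + (k : Fin (m+2)) :=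
        Option.some_injective _ ((hp _).symm.trans h)
      have h2 : a + (k : Fin (m+2)) = a := (hfix _).mp h1
      have h3 : (k : Fin (m+2)) = 0 := by linear_combination h2
      have h4 := congrArg Fin.val h3
      rw [Fin.val_natCast, Fin.val_zero, Nat.mod_eq_of_lt hk2] at h4
      omega
    have hsame : ∀ x y, x ∈ A0 ∪ A1 → y ∈ A0 ∪ A1 → (wheelGraph (m+2)).Adj x y →
        (x ∈ A0 ↔ y ∈ A0) := by
      intro x y hx hy hadj
      constructor
      · intro hx0
        rcases hy with h | h
        · exact h
        · exact absurd hadj (hcross x hx0 y h)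
      · intro hy0
        rcases hx with h | h
        · exact h
        · exact absurd hadj.symm (hcross y hy0 x h)
    have hpath : ∀ k : ℕ, 1 ≤ k → k < m+2 →
        (some (a + (k : Fin (m+2))) ∈ A0 ↔ some (a + ((1:ℕ) : Fin (m+2))) ∈ A0) := by
      intro k
      induction k with
      | zero => omega
      | succ k ih =>
        intro hk1 hk2
        rcases Nat.lt_or_ge k 1 with hk0 | hk0
        · obtain rfl : k = 0 := by omega
          exact Iff.rfl
        · have hadj : (wheelGraph (m+2)).Adj (some (a + (k : Fin (m+2))))
              (some (a + ((k+1 : ℕ) : Fin (m+2)))) := by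
            rw [wheel_adj_ss]
            refine cycleGraph_adj.mpr (Or.inr ?_)
            push_cast
            ring
          have hmk := hmem _ (hnonfix k hk0 (by omega))
          have hmk1 := hmem _ (hnonfix (k+1) (by omega) hk2)
          exact ((hsame _ _ hmk hmk1 hadj).symm.trans (ih hk0 (by omega)))
    have hlastcast : ((m+1 : ℕ) : Fin (m+2)) = -1 := by
      have h0 : ((m+1 : ℕ) : Fin (m+2)) + 1 = 0 := by
        rw [show ((m+1 : ℕ) : Fin (m+2)) + 1 = ((m+2 : ℕ) : Fin (m+2)) from by push_cast; ring,
          Fin.natCast_self]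
      linear_combination h0
    have hphi1 : phi (some (a + ((1:ℕ) : Fin (m+2)))) = some (a - 1) := by
      rw [hp]
      congr 1
      rw [hform]
      push_cast
      linear_combination -h2a
    have hlastmem := hpath (m+1) (by omega) (by omega)
    rw [show a + ((m+1 : ℕ) : Fin (m+2)) = a - 1 from by rw [hlastcast]; ring] at hlastmem
    rcases hmem _ (hnonfix 1 le_rfl (by omega)) with h0 | h1
    · have hA1 : some (a - 1) ∈ A1 := by
        rw [← hphi1]
        exact h01 _ h0
      have hA0 : some (a - 1) ∈ A0 := hlastmem.mpr h0
      exact (Set.disjoint_left.mp hdisj hA0) hA1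
    · have hA0 : some (a - 1) ∈ A0 := by
        rw [← hphi1]
        exact h10 _ h1
      have h0' : some (a + ((1:ℕ) : Fin (m+2))) ∈ A0 := hlastmem.mp hA0
      exact (Set.disjoint_left.mp hdisj h0') h1

end Helpers

theorem stmt10 (n : ℕ) (hn : 3 ≤ n) :
    IsSquareGraph (wheelGraph n) ↔ Even n := by
  obtain ⟨m, rfl⟩ : ∃ m, n = m + 2 := ⟨n - 2, by omega⟩
  have hm1 : 1 ≤ m := by omega
  constructor
  · intro h
    by_contra hodd
    rw [Nat.even_iff] at hodd
    obtain ⟨t, ht⟩ : ∃ t, m = 2*t + 1 := ⟨m / 2, by omega⟩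
    exact odd_not_square t ht h
  · intro h
    rw [Nat.even_iff] at h
    obtain ⟨c, hc1, hc2⟩ : ∃ c, 2 ≤ c ∧ m + 2 = 2 * c := ⟨(m+2)/2, by omega⟩
    exact even_square c hc1 hc2
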